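/- arXiv:2007.00321 — 3 statements merged into one kernel-verified Lean document; each statement's English description precedes it below -/
import Mathlib

section
/- Let A be an n×n complex matrix and T > 0. The matrix B = ∫₀ᵀ e^{At} dt is invertible if and only if for every eigenvalue λ of A, λT ∉ 2πi·(ℤ \ {0}). -/
open Matrix MeasureTheory

lemma exp_mulVec_eigen {n : ℕ} (M : Matrix (Fin n) (Fin n) ℂ) (v : Fin n → ℂ) (lam : ℂ)
    (hv : M.mulVec v = lam • v) :
    (NormedSpace.exp M).mulVec v = Complex.exp lam • v := by
  have hpow : ∀ k : ℕ, (M ^ k).mulVec v = lam ^ k • v := by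
    intro k
    induction k with
    | zero => simp
    | succ k ih =>
      rw [pow_succ, ← Matrix.mulVec_mulVec, hv, Matrix.mulVec_smul, ih, smul_smul,
        mul_comm, ← pow_succ]
  letI : SeminormedRing (Matrix (Fin n) (Fin n) ℂ) := Matrix.linftyOpSemiNormedRing
  letI : NormedRing (Matrix (Fin n) (Fin n) ℂ) := Matrix.linftyOpNormedRing
  letI : NormedAlgebra ℂ (Matrix (Fin n) (Fin n) ℂ) := Matrix.linftyOpNormedAlgebra
  let L : Matrix (Fin n) (Fin n) ℂ →ₗ[ℂ] (Fin n → ℂ) :=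
    { toFun := fun N => N.mulVec v
      map_add' := fun a b => Matrix.add_mulVec a b v
      map_smul' := fun c a => Matrix.smul_mulVec c a v }
  let Lc : Matrix (Fin n) (Fin n) ℂ →L[ℂ] (Fin n → ℂ) := LinearMap.toContinuousLinearMap L
  have hs : Summable fun k : ℕ => ((k.factorial : ℂ))⁻¹ • M ^ k :=
    NormedSpace.expSeries_summable' (𝕂 := ℂ) M
  have key : (NormedSpace.exp M).mulVec v
      = ∑' k : ℕ, ((k.factorial : ℂ))⁻¹ • (M ^ k).mulVec v := by
    rw [NormedSpace.exp_eq_tsum ℂ]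
    have h2 := Lc.map_tsum hs
    simpa [Lc, L] using h2
  rw [key]
  have heq : ∀ k : ℕ, ((k.factorial : ℂ))⁻¹ • (M ^ k).mulVec v
      = (((k.factorial : ℂ))⁻¹ * lam ^ k) • v := by
    intro k; rw [hpow k, smul_smul]
  rw [tsum_congr heq, Summable.tsum_smul_const (by simpa using NormedSpace.expSeries_summable' (𝕂 := ℂ) lam)]
  congr 1
  rw [Complex.exp_eq_exp_ℂ, NormedSpace.exp_eq_tsum ℂ]
  simp

lemma exp_entry_continuous {n : ℕ} (A : Matrix (Fin n) (Fin n) ℂ) (i j : Fin n) :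
    Continuous fun t : ℝ => (NormedSpace.exp (t • A)) i j := by
  letI : SeminormedRing (Matrix (Fin n) (Fin n) ℂ) := Matrix.linftyOpSemiNormedRing
  letI : NormedRing (Matrix (Fin n) (Fin n) ℂ) := Matrix.linftyOpNormedRing
  letI : NormedAlgebra ℂ (Matrix (Fin n) (Fin n) ℂ) := Matrix.linftyOpNormedAlgebra
  letI : NormedAlgebra ℚ (Matrix (Fin n) (Fin n) ℂ) := NormedAlgebra.restrictScalars ℚ ℂ _
  have h1 : Continuous fun t : ℝ => NormedSpace.exp (t • A) :=
    NormedSpace.exp_continuous.comp (continuous_id.smul continuous_const)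
  exact ((continuous_apply j).comp ((continuous_apply i).comp h1))

lemma B_mulVec_eigen {n : ℕ} (A : Matrix (Fin n) (Fin n) ℂ) (T : ℝ) (v : Fin n → ℂ) (lam : ℂ)
    (hv : A.mulVec v = lam • v) :
    (Matrix.of fun i j => ∫ t in (0:ℝ)..T, (NormedSpace.exp (t • A)) i j).mulVec v
      = (∫ t in (0:ℝ)..T, Complex.exp (lam * t)) • v := by
  funext i
  have hexp : ∀ t : ℝ, (NormedSpace.exp (t • A)).mulVec v = Complex.exp (lam * t) • v := by
    intro t
    have : (t • A).mulVec v = ((lam * t : ℂ)) • v := by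
      rw [Matrix.smul_mulVec, hv, smul_comm, mul_smul]
      congr 1
    simpa using exp_mulVec_eigen (t • A) v (lam * t) this
  have h1 : (Matrix.of fun i j => ∫ t in (0:ℝ)..T, (NormedSpace.exp (t • A)) i j).mulVec v i
      = ∑ j, (∫ t in (0:ℝ)..T, (NormedSpace.exp (t • A)) i j) * v j := by
    simp [Matrix.mulVec, dotProduct]
  rw [h1]
  have h2 : ∀ j : Fin n, (∫ t in (0:ℝ)..T, (NormedSpace.exp (t • A)) i j) * v j
      = ∫ t in (0:ℝ)..T, (NormedSpace.exp (t • A)) i j * v j := by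
    intro j; rw [intervalIntegral.integral_mul_const]
  simp_rw [h2]
  rw [← intervalIntegral.integral_finset_sum (f := fun j t => (NormedSpace.exp (t • A)) i j * v j) (fun j _ =>
    ((exp_entry_continuous A i j).mul continuous_const).intervalIntegrable _ _)]
  have h3 : ∀ t : ℝ, (∑ j, (NormedSpace.exp (t • A)) i j * v j)
      = Complex.exp (lam * t) * v i := by
    intro t
    have := congrFun (hexp t) i
    simpa [Matrix.mulVec, dotProduct] using this
  simp_rw [h3]
  rw [intervalIntegral.integral_mul_const]
  simp

lemma mem_spectrum_of_eigen {n : ℕ} (A : Matrix (Fin n) (Fin n) ℂ) (lam : ℂ) (v : Fin n → ℂ)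
    (hv0 : v ≠ 0) (h : A.mulVec v = lam • v) : lam ∈ spectrum ℂ A := by
  rw [spectrum.mem_iff]
  intro hU
  rw [Matrix.isUnit_iff_isUnit_det, isUnit_iff_ne_zero] at hU
  apply hU
  apply Matrix.exists_mulVec_eq_zero_iff.1
  refine ⟨v, hv0, ?_⟩
  rw [Algebra.algebraMap_eq_smul_one, Matrix.sub_mulVec, Matrix.smul_mulVec,
    Matrix.one_mulVec, h, sub_self]

lemma comm_AB {n : ℕ} (A : Matrix (Fin n) (Fin n) ℂ) (T : ℝ) :
    A * (Matrix.of fun i j => ∫ t in (0:ℝ)..T, (NormedSpace.exp (t • A)) i j)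
      = (Matrix.of fun i j => ∫ t in (0:ℝ)..T, (NormedSpace.exp (t • A)) i j) * A := by
  letI : SeminormedRing (Matrix (Fin n) (Fin n) ℂ) := Matrix.linftyOpSemiNormedRing
  letI : NormedRing (Matrix (Fin n) (Fin n) ℂ) := Matrix.linftyOpNormedRing
  letI : NormedAlgebra ℂ (Matrix (Fin n) (Fin n) ℂ) := Matrix.linftyOpNormedAlgebra
  have hc : ∀ t : ℝ, A * NormedSpace.exp (t • A) = NormedSpace.exp (t • A) * A := by
    intro t
    exact (((Commute.refl A).smul_right t).exp_right).eq
  funext i j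
  show ∑ k, A i k * (∫ t in (0:ℝ)..T, (NormedSpace.exp (t • A)) k j)
      = ∑ k, (∫ t in (0:ℝ)..T, (NormedSpace.exp (t • A)) i k) * A k j
  have h1 : ∀ k, A i k * (∫ t in (0:ℝ)..T, (NormedSpace.exp (t • A)) k j)
      = ∫ t in (0:ℝ)..T, A i k * (NormedSpace.exp (t • A)) k j := fun k =>
    (intervalIntegral.integral_const_mul _ _).symm
  have h2 : ∀ k, (∫ t in (0:ℝ)..T, (NormedSpace.exp (t • A)) i k) * A k j
      = ∫ t in (0:ℝ)..T, (NormedSpace.exp (t • A)) i k * A k j := fun k =>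
    (intervalIntegral.integral_mul_const _ _).symm
  simp_rw [h1, h2]
  rw [← intervalIntegral.integral_finset_sum (f := fun k t => A i k * (NormedSpace.exp (t • A)) k j) (fun k _ =>
    (continuous_const.mul (exp_entry_continuous A k j)).intervalIntegrable _ _),
    ← intervalIntegral.integral_finset_sum (f := fun k t => (NormedSpace.exp (t • A)) i k * A k j) (fun k _ =>
    ((exp_entry_continuous A i k).mul continuous_const).intervalIntegrable _ _)]
  congr 1
  funext t
  exact congrFun (congrFun (hc t) i) j

/-- For `A : Matrix (Fin n) (Fin n) ℂ` and `T > 0`, the matrix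
`B = ∫₀ᵀ e^{At} dt` (entrywise integral) is invertible iff no eigenvalue `λ` of `A`
satisfies `λ T ∈ 2πi (ℤ \ {0})`. -/
theorem integral_exp_invertible_iff (n : ℕ) (A : Matrix (Fin n) (Fin n) ℂ) (T : ℝ)
    (hT : 0 < T) :
    IsUnit (Matrix.of fun i j => ∫ t in (0:ℝ)..T, (NormedSpace.exp (t • A)) i j) ↔
      ∀ lam ∈ spectrum ℂ A, ∀ k : ℤ, k ≠ 0 →
        lam * (T : ℂ) ≠ 2 * Real.pi * Complex.I * (k : ℂ) := by
  set B : Matrix (Fin n) (Fin n) ℂ :=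
    Matrix.of fun i j => ∫ t in (0:ℝ)..T, (NormedSpace.exp (t • A)) i j with hBdef
  constructor
  · intro hU lam hlam k hk heq
    have hlam0 : lam ≠ 0 := by
      rintro rfl
      have : (2 * (Real.pi : ℂ) * Complex.I * (k : ℂ)) ≠ 0 := by
        apply mul_ne_zero
        apply mul_ne_zero
        · simpa using Real.pi_ne_zero
        · exact Complex.I_ne_zero
        · exact_mod_cast hk
      exact this (by simpa using heq.symm)
    -- eigenvector for lam
    rw [spectrum.mem_iff] at hlam
    have hdet : ((algebraMap ℂ (Matrix (Fin n) (Fin n) ℂ)) lam - A).det = 0 := by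
      by_contra hd
      exact hlam ((Matrix.isUnit_iff_isUnit_det _).2 (isUnit_iff_ne_zero.2 hd))
    obtain ⟨v, hv0, hv⟩ := Matrix.exists_mulVec_eq_zero_iff.2 hdet
    have hAv : A.mulVec v = lam • v := by
      rw [Algebra.algebraMap_eq_smul_one, Matrix.sub_mulVec, Matrix.smul_mulVec,
        Matrix.one_mulVec, sub_eq_zero] at hv
      exact hv.symm
    have hint : (∫ t in (0:ℝ)..T, Complex.exp (lam * t)) = 0 := by
      rw [integral_exp_mul_complex hlam0]
      have hone : Complex.exp (lam * T) = 1 := by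
        rw [Complex.exp_eq_one_iff]
        exact ⟨k, by rw [heq]; ring⟩
      simp [hone]
    have hBv : B.mulVec v = 0 := by
      rw [hBdef, B_mulVec_eigen A T v lam hAv, hint, zero_smul]
    have : B.det = 0 := Matrix.exists_mulVec_eq_zero_iff.1 ⟨v, hv0, hBv⟩
    rw [Matrix.isUnit_iff_isUnit_det, this] at hU
    exact (not_isUnit_zero hU)
  · intro h
    by_contra hU
    rw [Matrix.isUnit_iff_isUnit_det, isUnit_iff_ne_zero, not_not] at hU
    obtain ⟨v, hv0, hv⟩ := Matrix.exists_mulVec_eq_zero_iff.2 hU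
    set K := LinearMap.ker B.mulVecLin with hK
    have hvK : v ∈ K := by simpa [hK, LinearMap.mem_ker] using hv
    haveI : Nontrivial K := ⟨⟨⟨v, hvK⟩, 0, by simp [Subtype.ext_iff, hv0]⟩⟩
    have hinv : ∀ x ∈ K, A.mulVecLin x ∈ K := by
      intro x hx
      rw [hK, LinearMap.mem_ker] at hx ⊢
      simp only [Matrix.mulVecLin_apply] at hx ⊢
      rw [Matrix.mulVec_mulVec, ← comm_AB A T, ← Matrix.mulVec_mulVec, hx, Matrix.mulVec_zero]
    let f : Module.End ℂ K := (A.mulVecLin).restrict hinv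
    obtain ⟨mu, hmu⟩ := Module.End.exists_eigenvalue f
    obtain ⟨w, hw⟩ := hmu.exists_hasEigenvector
    have hw0 : (w : Fin n → ℂ) ≠ 0 := fun hh => hw.2 (Subtype.ext hh)
    have hAw : A.mulVec (w : Fin n → ℂ) = mu • (w : Fin n → ℂ) := by
      have h1 : ((f w : K) : Fin n → ℂ) = mu • (w : Fin n → ℂ) := by
        rw [hw.apply_eq_smul]; rfl
      have h2 : ((f w : K) : Fin n → ℂ) = A.mulVec (w : Fin n → ℂ) := by
        simp only [f, LinearMap.restrict_coe_apply, Matrix.mulVecLin_apply]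
      rw [← h2, h1]
    have hBw : B.mulVec (w : Fin n → ℂ) = 0 := by
      have h3 : B.mulVecLin (w : Fin n → ℂ) = 0 := w.2
      rw [Matrix.mulVecLin_apply] at h3
      exact h3
    have hs : (∫ t in (0:ℝ)..T, Complex.exp (mu * t)) = 0 := by
      have := (B_mulVec_eigen A T (w : Fin n → ℂ) mu hAw).symm.trans hBw
      exact (smul_eq_zero.1 this).resolve_right hw0
    have hmu0 : mu ≠ 0 := by
      rintro rfl
      have heval : (∫ t in (0:ℝ)..T, Complex.exp ((0:ℂ) * t)) = (T : ℂ) := by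
        simp_rw [zero_mul, Complex.exp_zero]
        rw [intervalIntegral.integral_const]
        simp
      rw [heval] at hs
      exact (Complex.ofReal_ne_zero.2 (ne_of_gt hT)) hs
    rw [integral_exp_mul_complex hmu0, div_eq_zero_iff] at hs
    have hone : Complex.exp (mu * T) = 1 := by
      rcases hs with hs | hs
      · have : Complex.exp (mu * (0:ℝ)) = 1 := by simp
        rw [sub_eq_zero] at hs
        rw [hs, this]
      · exact absurd hs hmu0
    rw [Complex.exp_eq_one_iff] at hone
    obtain ⟨k, hk⟩ := hone
    have hk0 : k ≠ 0 := by
      rintro rfl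
      simp only [Int.cast_zero, zero_mul] at hk
      exact mul_ne_zero hmu0 (Complex.ofReal_ne_zero.2 (ne_of_gt hT)) hk
    have hmem : mu ∈ spectrum ℂ A := mem_spectrum_of_eigen A mu _ hw0 hAw
    exact h mu hmem k hk0 (by rw [hk]; ring)
end

section
/- A real invertible 2×2 matrix whose Jordan form is the single 2×2 Jordan block (λ, 1; 0, λ) with λ < 0 does not have a real logarithm. -/
open Matrix

open NormedSpace in
lemma exp_of_sq_zero' {𝔸 : Type*} [Ring 𝔸] [Algebra ℝ 𝔸] [TopologicalSpace 𝔸]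
    [IsTopologicalRing 𝔸] [T2Space 𝔸] (x : 𝔸) (hx : x * x = 0) :
    exp x = 1 + x := by
  rw [exp_eq_tsum ℝ]
  show (∑' n : ℕ, ((n.factorial : ℝ))⁻¹ • x ^ n) = 1 + x
  rw [tsum_eq_sum (s := ({0, 1} : Finset ℕ)) (by
    intro n hn
    simp only [Finset.mem_insert, Finset.mem_singleton] at hn
    push_neg at hn
    obtain ⟨m, rfl⟩ : ∃ m, n = m + 2 := ⟨n - 2, by omega⟩
    rw [pow_add, pow_two, hx, mul_zero, smul_zero])]
  norm_num [Finset.sum_pair]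

/-- a real invertible `2 × 2` matrix whose Jordan form is the single Jordan
block `(λ, 1; 0, λ)` with `λ < 0` has no real logarithm. -/
theorem no_real_log_of_jordan_block (A : Matrix (Fin 2) (Fin 2) ℝ) (lam : ℝ) (hlam : lam < 0)
    (hsim : ∃ P : Matrix (Fin 2) (Fin 2) ℂ, IsUnit P ∧
      A.map Complex.ofReal = P * !![(lam : ℂ), 1; 0, (lam : ℂ)] * P⁻¹) :
    ¬ ∃ L : Matrix (Fin 2) (Fin 2) ℝ, NormedSpace.exp L = A := by
  rintro ⟨L, hL⟩
  obtain ⟨P, hP, hA⟩ := hsim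
  have hPdet : IsUnit P.det := (Matrix.isUnit_iff_isUnit_det P).mp hP
  have hPinv : P * P⁻¹ = 1 := Matrix.mul_nonsing_inv P hPdet
  have hPinv' : P⁻¹ * P = 1 := Matrix.nonsing_inv_mul P hPdet
  set E : Matrix (Fin 2) (Fin 2) ℂ := !![0, 1; 0, 0] with hEdef
  have hEsq : E * E = 0 := by
    ext i j
    fin_cases i <;> fin_cases j <;>
      simp [hEdef, Matrix.mul_apply, Fin.sum_univ_two]
  set N : Matrix (Fin 2) (Fin 2) ℝ := A - lam • 1 with hNdef
  have hmap : N.map Complex.ofReal = A.map Complex.ofReal - (lam : ℂ) • 1 := by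
    ext i j
    simp only [hNdef, Matrix.map_apply, Matrix.sub_apply, Matrix.smul_apply,
      Matrix.one_apply]
    split_ifs <;> simp [smul_eq_mul]
  have hE : A.map Complex.ofReal - (lam : ℂ) • 1 = P * E * P⁻¹ := by
    rw [hA]
    have h1 : P * !![(lam : ℂ), 1; 0, (lam : ℂ)] * P⁻¹ -
        P * ((lam : ℂ) • 1) * P⁻¹ = P * E * P⁻¹ := by
      rw [← Matrix.sub_mul, ← Matrix.mul_sub]
      congr 1
      congr 1
      ext i j
      fin_cases i <;> fin_cases j <;>
        simp [hEdef, Matrix.smul_apply, Matrix.one_apply]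
    have h2 : P * ((lam : ℂ) • 1) * P⁻¹ = (lam : ℂ) • 1 := by
      rw [Matrix.mul_smul, Matrix.mul_one, Matrix.smul_mul, hPinv]
    rw [← h2, h1]
  have hNC : N.map Complex.ofReal = P * E * P⁻¹ := hmap.trans hE
  -- N is square-zero
  have hN2 : N * N = 0 := by
    have hmul : (N * N).map Complex.ofReal =
        N.map Complex.ofReal * N.map Complex.ofReal := by
      exact Matrix.map_mul (f := Complex.ofRealHom)
    have hz : (N * N).map Complex.ofReal = 0 := by
      rw [hmul, hNC]
      calc P * E * P⁻¹ * (P * E * P⁻¹)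
          = P * E * (P⁻¹ * P) * (E * P⁻¹) := by simp only [Matrix.mul_assoc]
        _ = P * (E * E) * P⁻¹ := by rw [hPinv', Matrix.mul_one]; simp only [Matrix.mul_assoc]
        _ = 0 := by rw [hEsq, Matrix.mul_zero, Matrix.zero_mul]
    ext i j
    have := congrFun (congrFun hz i) j
    simpa [Matrix.map_apply] using this
  -- N is nonzero
  have hNne : N ≠ 0 := by
    intro h0
    have hz : P * E * P⁻¹ = 0 := by rw [← hNC, h0]; simp
    have hEz : E = 0 := by
      have : P⁻¹ * (P * E * P⁻¹) * P = E := by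
        calc P⁻¹ * (P * E * P⁻¹) * P = (P⁻¹ * P) * E * (P⁻¹ * P) := by
              simp only [Matrix.mul_assoc]
          _ = E := by rw [hPinv']; simp
      rw [hz] at this
      simpa using this.symm
    have := congrFun (congrFun hEz 0) 1
    simp [hEdef] at this
  -- notation for entries
  set p := N 0 0 with hp
  set q := N 0 1 with hq
  set r := N 1 0 with hr
  set s := N 1 1 with hs
  have e00 : p * p + q * r = 0 := by
    have := congrFun (congrFun hN2 0) 0
    simpa [Matrix.mul_apply, Fin.sum_univ_two, ← hp, ← hq, ← hr, ← hs] using this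
  have e01 : p * q + q * s = 0 := by
    have := congrFun (congrFun hN2 0) 1
    simpa [Matrix.mul_apply, Fin.sum_univ_two, ← hp, ← hq, ← hr, ← hs, mul_comm] using this
  have e10 : r * p + s * r = 0 := by
    have := congrFun (congrFun hN2 1) 0
    simpa [Matrix.mul_apply, Fin.sum_univ_two, ← hp, ← hq, ← hr, ← hs, mul_comm] using this
  have e11 : r * q + s * s = 0 := by
    have := congrFun (congrFun hN2 1) 1
    simpa [Matrix.mul_apply, Fin.sum_univ_two, ← hp, ← hq, ← hr, ← hs, mul_comm] using this
  -- trace of N is zero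
  have htr : s = -p := by
    by_contra hne
    have hps : p + s ≠ 0 := fun h => hne (by linarith [h])
    have hq0 : q = 0 := by
      rcases mul_eq_zero.mp (show q * (p + s) = 0 by ring_nf; linarith [e01]) with h | h
      · exact h
      · exact absurd h hps
    have hr0 : r = 0 := by
      rcases mul_eq_zero.mp (show r * (p + s) = 0 by ring_nf; linarith [e10]) with h | h
      · exact h
      · exact absurd h hps
    have hp0 : p = 0 := by nlinarith [e00]
    have hs0 : s = 0 := by nlinarith [e11]
    exact hps (by rw [hp0, hs0, add_zero])
  -- L commutes with N
  have hLA : Commute L A := by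
    rw [← hL]; exact ((Commute.refl L).exp_right).symm.symm
  have hLN : Commute L N := by
    have h1 : Commute L (lam • (1 : Matrix (Fin 2) (Fin 2) ℝ)) :=
      (Commute.one_right L).smul_right lam
    exact hLA.sub_right h1
  have hLNeq : L * N = N * L := hLN
  set w := L 0 0 with hw
  set x := L 0 1 with hx
  set y := L 1 0 with hy
  set z := L 1 1 with hz'
  have f00 : w * p + x * r = p * w + q * y := by
    have := congrFun (congrFun hLNeq 0) 0
    simpa [Matrix.mul_apply, Fin.sum_univ_two, ← hp, ← hq, ← hr, ← hs, ← hw, ← hx, ← hy,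
      ← hz'] using this
  have f01 : w * q + x * s = p * x + q * z := by
    have := congrFun (congrFun hLNeq 0) 1
    simpa [Matrix.mul_apply, Fin.sum_univ_two, ← hp, ← hq, ← hr, ← hs, ← hw, ← hx, ← hy,
      ← hz'] using this
  have f10 : y * p + z * r = r * w + s * y := by
    have := congrFun (congrFun hLNeq 1) 0
    simpa [Matrix.mul_apply, Fin.sum_univ_two, ← hp, ← hq, ← hr, ← hs, ← hw, ← hx, ← hy,
      ← hz'] using this
  -- L = a • 1 + b • N
  have hLmat : L = !![w, x; y, z] := by rw [hw, hx, hy, hz']; exact Matrix.eta_fin_two L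
  have hNmat : N = !![p, q; r, s] := by rw [hp, hq, hr, hs]; exact Matrix.eta_fin_two N
  have hLform : ∃ a b : ℝ, L = a • 1 + b • N := by
    by_cases hq0 : q = 0
    · -- then p = 0, s = 0, r ≠ 0
      have hp0 : p = 0 := by
        have h := e00
        rw [hq0] at h
        have : p * p = 0 := by linarith
        exact mul_self_eq_zero.mp this
      have hs0 : s = 0 := by rw [htr, hp0, neg_zero]
      have hr0 : r ≠ 0 := by
        intro hr0
        apply hNne
        rw [hNmat, hp0, hq0, hr0, hs0]
        ext i j
        fin_cases i <;> fin_cases j <;> simp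
      refine ⟨w, y / r, ?_⟩
      have hx0 : x = 0 := by
        have : x * r = 0 := by rw [hp0, hq0] at f00; linarith [f00]
        rcases mul_eq_zero.mp this with h | h
        · exact h
        · exact absurd h hr0
      have hzw : z = w := by
        have h2 : z * r = w * r := by rw [hp0, hs0] at f10; linarith
        exact mul_right_cancel₀ hr0 h2
      rw [hLmat, hNmat, Matrix.one_fin_two, hp0, hq0, hs0, hx0, hzw]
      ext i j
      fin_cases i <;> fin_cases j <;> simp <;> field_simp
    · refine ⟨w - x * p / q, x / q, ?_⟩
      have hyeq : y * q = x * r := by linarith [f00]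
      have hzeq : z * q = w * q + x * s - p * x := by linarith [f01]
      rw [hLmat, hNmat, Matrix.one_fin_two]
      ext i j
      fin_cases i <;> fin_cases j
      · simp <;> try field_simp <;> try ring
      · simp <;> try field_simp
      · simp <;> try field_simp <;> try linear_combination hyeq
      · simp <;> try field_simp <;> try linear_combination hzeq
  obtain ⟨a, b, hLab⟩ := hLform
  -- compute exp L
  have hcomm : Commute (a • (1 : Matrix (Fin 2) (Fin 2) ℝ)) (b • N) :=
    ((Commute.one_left N).smul_left a).smul_right b
  have hexp1 : NormedSpace.exp (a • (1 : Matrix (Fin 2) (Fin 2) ℝ)) =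
      Real.exp a • (1 : Matrix (Fin 2) (Fin 2) ℝ) := by
    rw [Matrix.smul_one_eq_diagonal, Matrix.exp_diagonal, Matrix.smul_one_eq_diagonal]
    congr 1
    ext i
    rw [Pi.exp_def]
    simp [← Real.exp_eq_exp_ℝ]
  have hexp2 : NormedSpace.exp (b • N) = 1 + b • N := by
    apply exp_of_sq_zero'
    rw [smul_mul_smul_comm, hN2, smul_zero]
  have hexpL : A = Real.exp a • (1 : Matrix (Fin 2) (Fin 2) ℝ) + (Real.exp a * b) • N := by
    rw [← hL, hLab, Matrix.exp_add_of_commute _ _ hcomm, hexp1, hexp2]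
    rw [Matrix.mul_add, Matrix.mul_one, Matrix.smul_mul, Matrix.one_mul, smul_smul]
  -- derive contradiction from diagonal entries
  have hAN : A = lam • 1 + N := by rw [hNdef]; abel
  have h00 : Real.exp a + Real.exp a * b * p = lam + p := by
    have := congrFun (congrFun (hexpL.symm.trans hAN) 0) 0
    simpa [Matrix.add_apply, Matrix.smul_apply, Matrix.one_apply, ← hp] using this
  have h11 : Real.exp a + Real.exp a * b * s = lam + s := by
    have := congrFun (congrFun (hexpL.symm.trans hAN) 1) 1
    simpa [Matrix.add_apply, Matrix.smul_apply, Matrix.one_apply, ← hs] using this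
  have : Real.exp a = lam := by rw [htr] at h11; linarith
  linarith [Real.exp_pos a]
end

section
/- Let W̃ ∈ ℂ^{M×M} be block-diagonalizable as W̃ = V [[0_{n×n}, 0],[0, C]] V^{−1} with C invertible, and suppose W̃ Z* = −h̃. Set W = e^{W̃ Δt} and h = e^{W̃ Δt} V [[ΔtI_n, 0],[0, −C^{−1}(e^{−CΔt} − I)]] V^{−1} h̃. Then h = (I − W) Z*. -/
open Matrix


open Matrix NormedSpace

theorem exp_fromBlocks_aux {n m : ℕ} (A : Matrix (Fin n) (Fin n) ℂ)
    (D : Matrix (Fin m) (Fin m) ℂ) :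
    exp (Matrix.fromBlocks A 0 0 D) = Matrix.fromBlocks (exp A) 0 0 (exp D) := by
  letI : NormedRing (Matrix (Fin n) (Fin n) ℂ) := Matrix.linftyOpNormedRing
  letI : NormedAlgebra ℂ (Matrix (Fin n) (Fin n) ℂ) := Matrix.linftyOpNormedAlgebra
  letI : NormedRing (Matrix (Fin m) (Fin m) ℂ) := Matrix.linftyOpNormedRing
  letI : NormedAlgebra ℂ (Matrix (Fin m) (Fin m) ℂ) := Matrix.linftyOpNormedAlgebra
  letI : NormedRing (Matrix (Fin n ⊕ Fin m) (Fin n ⊕ Fin m) ℂ) := Matrix.linftyOpNormedRing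
  letI : NormedAlgebra ℂ (Matrix (Fin n ⊕ Fin m) (Fin n ⊕ Fin m) ℂ) :=
    Matrix.linftyOpNormedAlgebra
  letI : NormedAlgebra ℚ (Matrix (Fin n) (Fin n) ℂ) := Matrix.linftyOpNormedAlgebra
  letI : NormedAlgebra ℚ (Matrix (Fin m) (Fin m) ℂ) := Matrix.linftyOpNormedAlgebra
  let φ : Matrix (Fin n) (Fin n) ℂ × Matrix (Fin m) (Fin m) ℂ →+*
      Matrix (Fin n ⊕ Fin m) (Fin n ⊕ Fin m) ℂ :=
    { toFun := fun p => Matrix.fromBlocks p.1 0 0 p.2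
      map_one' := Matrix.fromBlocks_one
      map_mul' := fun p q => by
        simp [Matrix.fromBlocks_multiply]
      map_zero' := by simp [Matrix.fromBlocks_zero]
      map_add' := fun p q => by simp [Matrix.fromBlocks_add] }
  have hφ : Continuous φ := by
    apply Continuous.matrix_fromBlocks continuous_fst continuous_const continuous_const
      continuous_snd
  have h := map_exp φ hφ (A, D)
  have hexp : exp ((A, D) : Matrix (Fin n) (Fin n) ℂ × Matrix (Fin m) (Fin m) ℂ)
      = (exp A, exp D) := Prod.ext (Prod.fst_exp _) (Prod.snd_exp _)
  erw [hexp] at h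
  exact h.symm


/-- fixed-point consistency when `Wt = V [[0,0],[0,C]] V⁻¹` with `C`
invertible: if `Wt Z* = −ht` and
`h = e^{Wt Δt} V [[Δt I, 0],[0, −C⁻¹(e^{−CΔt} − I)]] V⁻¹ ht`, then
`h = (I − e^{Wt Δt}) Z*`. -/
theorem fixed_point_compat_block (n m : ℕ)
    (V : Matrix (Fin n ⊕ Fin m) (Fin n ⊕ Fin m) ℂ) (hV : IsUnit V)
    (C : Matrix (Fin m) (Fin m) ℂ) (hC : IsUnit C) (Δt : ℝ) (hΔt : 0 < Δt)
    (ht Zs : Fin n ⊕ Fin m → ℂ)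
    (Wt : Matrix (Fin n ⊕ Fin m) (Fin n ⊕ Fin m) ℂ)
    (hWt : Wt = V * Matrix.fromBlocks 0 0 0 C * V⁻¹)
    (heq : Wt.mulVec Zs = -ht) :
    (NormedSpace.exp (Δt • Wt)).mulVec
        ((V * Matrix.fromBlocks ((Δt : ℂ) • (1 : Matrix (Fin n) (Fin n) ℂ)) 0 0
            (-(C⁻¹ * (NormedSpace.exp (-(Δt • C)) - 1))) * V⁻¹).mulVec ht) =
      (1 - NormedSpace.exp (Δt • Wt)).mulVec Zs := by
  letI : NormedRing (Matrix (Fin m) (Fin m) ℂ) := Matrix.linftyOpNormedRing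
  letI : NormedAlgebra ℂ (Matrix (Fin m) (Fin m) ℂ) := Matrix.linftyOpNormedAlgebra
  letI : NormedAlgebra ℚ (Matrix (Fin m) (Fin m) ℂ) := Matrix.linftyOpNormedAlgebra
  have hV1 : V * V⁻¹ = 1 := mul_nonsing_inv V ((isUnit_iff_isUnit_det V).mp hV)
  have hV2 : V⁻¹ * V = 1 := nonsing_inv_mul V ((isUnit_iff_isUnit_det V).mp hV)
  have hC1 : C * C⁻¹ = 1 := mul_nonsing_inv C ((isUnit_iff_isUnit_det C).mp hC)
  have hC2 : C⁻¹ * C = 1 := nonsing_inv_mul C ((isUnit_iff_isUnit_det C).mp hC)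
  set E := NormedSpace.exp (Δt • C) with hE
  set E' := NormedSpace.exp (-(Δt • C)) with hE'
  set F := Matrix.fromBlocks ((Δt : ℂ) • (1 : Matrix (Fin n) (Fin n) ℂ)) 0 0
      (-(C⁻¹ * (E' - 1))) with hF
  set D := Matrix.fromBlocks (0 : Matrix (Fin n) (Fin n) ℂ) 0 0 C with hD
  have hsmul : Δt • Wt = V * Matrix.fromBlocks 0 0 0 (Δt • C) * V⁻¹ := by
    have h0 : Matrix.fromBlocks (0 : Matrix (Fin n) (Fin n) ℂ) 0 0 (Δt • C) = Δt • D := by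
      simp [hD, Matrix.fromBlocks_smul]
    rw [hWt, h0, mul_smul_comm, smul_mul_assoc]
  have hexpW : NormedSpace.exp (Δt • Wt) = V * Matrix.fromBlocks 1 0 0 E * V⁻¹ := by
    rw [hsmul, Matrix.exp_conj V _ hV, exp_fromBlocks_aux, NormedSpace.exp_zero]
  have hEE' : E * E' = 1 := by
    rw [hE, hE', ← Matrix.exp_add_of_commute _ _ ((Commute.refl (Δt • C)).neg_right),
      add_neg_cancel, NormedSpace.exp_zero]
  have hCE' : C * E' = E' * C :=
    ((((Commute.refl C).smul_right Δt).neg_right).exp_right).eq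
  have hCiE' : C⁻¹ * E' = E' * C⁻¹ := by
    calc C⁻¹ * E' = C⁻¹ * E' * (C * C⁻¹) := by rw [hC1, Matrix.mul_one]
      _ = C⁻¹ * (E' * C) * C⁻¹ := by simp only [Matrix.mul_assoc]
      _ = C⁻¹ * (C * E') * C⁻¹ := by rw [hCE']
      _ = E' * C⁻¹ := by rw [← Matrix.mul_assoc, hC2, Matrix.one_mul]
  have hconjE : C⁻¹ * (E' - 1) * C = E' - 1 := by
    rw [Matrix.mul_assoc, Matrix.sub_mul, Matrix.one_mul, Matrix.mul_sub, hC2,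
      ← Matrix.mul_assoc, hCiE', Matrix.mul_assoc, hC2, Matrix.mul_one]
  have hblock : -(C⁻¹ * (E' - 1)) * C = 1 - E' := by
    rw [Matrix.neg_mul, hconjE, neg_sub]
  have hkey : Matrix.fromBlocks (1 : Matrix (Fin n) (Fin n) ℂ) 0 0 E * (F * D)
      = -(1 - Matrix.fromBlocks (1 : Matrix (Fin n) (Fin n) ℂ) 0 0 E) := by
    rw [hF, hD, Matrix.fromBlocks_multiply, Matrix.fromBlocks_multiply]
    simp only [Matrix.mul_zero, Matrix.zero_mul, Matrix.mul_one, Matrix.one_mul,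
      add_zero, zero_add, Matrix.smul_mul, smul_zero]
    rw [hblock]
    rw [← Matrix.fromBlocks_one (l := Fin n) (m := Fin m) (α := ℂ)]
    have hmul : E * (1 - E') = E - 1 := by rw [Matrix.mul_sub, Matrix.mul_one, hEE']
    rw [hmul]
    ext (i | i) (j | j) <;> simp [Matrix.one_apply]
  have conj_mul : ∀ X Y : Matrix (Fin n ⊕ Fin m) (Fin n ⊕ Fin m) ℂ,
      (V * X * V⁻¹) * (V * Y * V⁻¹) = V * (X * Y) * V⁻¹ := by
    intro X Y
    calc (V * X * V⁻¹) * (V * Y * V⁻¹) = V * X * (V⁻¹ * V) * Y * V⁻¹ := by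
          simp only [Matrix.mul_assoc]
      _ = V * (X * Y) * V⁻¹ := by
          rw [hV2, Matrix.mul_one]; simp only [Matrix.mul_assoc]
  have main : NormedSpace.exp (Δt • Wt) * (V * F * V⁻¹) * Wt
      = -(1 - NormedSpace.exp (Δt • Wt)) := by
    rw [hexpW, hWt, Matrix.mul_assoc _ _ (V * D * V⁻¹), conj_mul, conj_mul, hkey]
    rw [Matrix.mul_neg, Matrix.neg_mul, Matrix.mul_sub, Matrix.sub_mul, Matrix.mul_one, hV1]
  have hht : ht = -(Wt.mulVec Zs) := by rw [heq, neg_neg]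
  calc (NormedSpace.exp (Δt • Wt)).mulVec ((V * F * V⁻¹).mulVec ht)
      = (NormedSpace.exp (Δt • Wt) * (V * F * V⁻¹)).mulVec (-(Wt.mulVec Zs)) := by
        rw [Matrix.mulVec_mulVec, hht]
    _ = -((NormedSpace.exp (Δt • Wt) * (V * F * V⁻¹) * Wt).mulVec Zs) := by
        rw [Matrix.mulVec_neg, Matrix.mulVec_mulVec]
    _ = (1 - NormedSpace.exp (Δt • Wt)).mulVec Zs := by
        rw [main, Matrix.neg_mulVec, neg_neg]
end
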